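/- Let 𝕂 be ℝ or ℂ and let V be a finite-dimensional 𝕂-vector space. For an alternating bilinear map A : V × V → 𝕂 (A(x,y) = −A(y,x)) define the 4-linear map α(A) : V⁴ → 𝕂 by α(A)(w,x,y,z) = (1/3)(2·A(w,x)·A(y,z) + A(w,y)·A(x,z) − A(w,z)·A(x,y)). Then the 𝕂-linear span of the set { α(A) : A alternating bilinear on V } equals the vector space of all algebraic curvature tensors on V. -/

import Mathlib

/-- An algebraic curvature tensor on a `𝕂`-vector space `V`: a 4-linear map `T : V⁴ → 𝕂`
with `T(w,x,y,z) = -T(w,x,z,y) = T(y,z,w,x)` and the first Bianchi identity. -/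
def IsACT {𝕂 : Type*} [RCLike 𝕂] {V : Type*} [AddCommGroup V] [Module 𝕂 V]
    (T : MultilinearMap 𝕂 (fun _ : Fin 4 => V) 𝕂) : Prop :=
  ∀ w x y z : V,
    T ![w, x, y, z] = - T ![w, x, z, y] ∧
    T ![w, x, y, z] = T ![y, z, w, x] ∧
    T ![w, x, y, z] + T ![w, y, z, x] + T ![w, z, x, y] = 0

section ACTaux

set_option linter.unusedSectionVars false

variable {𝕂 : Type*} [RCLike 𝕂] {V : Type*} [AddCommGroup V] [Module 𝕂 V]

/-- Product of two bilinear forms as a 4-linear map. -/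
noncomputable def tmulACT (A B : MultilinearMap 𝕂 (fun _ : Fin 2 => V) 𝕂) :
    MultilinearMap 𝕂 (fun _ : Fin 4 => V) 𝕂 :=
  ((LinearMap.mul' 𝕂 𝕂).compMultilinearMap (A.domCoprod B)).domDomCongr
    (finSumFinEquiv : Fin 2 ⊕ Fin 2 ≃ Fin 4)

lemma tmulACT_apply (A B : MultilinearMap 𝕂 (fun _ : Fin 2 => V) 𝕂) (v : Fin 4 → V) :
    tmulACT A B v = A ![v 0, v 1] * B ![v 2, v 3] := by
  have h1 : (fun i : Fin 2 => v ((finSumFinEquiv : Fin 2 ⊕ Fin 2 ≃ Fin 4) (Sum.inl i)))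
      = ![v 0, v 1] := by funext i; fin_cases i <;> rfl
  have h2 : (fun i : Fin 2 => v ((finSumFinEquiv : Fin 2 ⊕ Fin 2 ≃ Fin 4) (Sum.inr i)))
      = ![v 2, v 3] := by funext i; fin_cases i <;> rfl
  simp only [tmulACT, MultilinearMap.domDomCongr_apply, LinearMap.compMultilinearMap_apply,
    MultilinearMap.domCoprod_apply, LinearMap.mul'_apply]
  rw [h1, h2]

def permACT1 : Equiv.Perm (Fin 4) := Equiv.swap 1 2
def permACT2 : Equiv.Perm (Fin 4) := ⟨![0,3,1,2], ![0,2,3,1], by decide, by decide⟩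

/-- The curvature tensor built from an alternating bilinear form. -/
noncomputable def alphaMap (A : MultilinearMap 𝕂 (fun _ : Fin 2 => V) 𝕂) :
    MultilinearMap 𝕂 (fun _ : Fin 4 => V) 𝕂 :=
  (3 : 𝕂)⁻¹ • ((2 : 𝕂) • tmulACT A A + (tmulACT A A).domDomCongr permACT1
    - (tmulACT A A).domDomCongr permACT2)

lemma alphaMap_apply (A : MultilinearMap 𝕂 (fun _ : Fin 2 => V) 𝕂) (v : Fin 4 → V) :
    alphaMap A v = (3 : 𝕂)⁻¹ * (2 * (A ![v 0, v 1] * A ![v 2, v 3])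
      + A ![v 0, v 2] * A ![v 1, v 3] - A ![v 0, v 3] * A ![v 1, v 2]) := by
  simp only [alphaMap, MultilinearMap.smul_apply, MultilinearMap.add_apply,
    MultilinearMap.sub_apply, MultilinearMap.domDomCongr_apply, tmulACT_apply, smul_eq_mul]
  rw [show permACT1 (0:Fin 4) = 0 from by decide, show permACT1 (1:Fin 4) = 2 from by decide,
    show permACT1 (2:Fin 4) = 1 from by decide, show permACT1 (3:Fin 4) = 3 from by decide,
    show permACT2 (0:Fin 4) = 0 from by decide, show permACT2 (1:Fin 4) = 3 from by decide,
    show permACT2 (2:Fin 4) = 1 from by decide, show permACT2 (3:Fin 4) = 2 from by decide]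

noncomputable def w2 (f g : V →ₗ[𝕂] 𝕂) : MultilinearMap 𝕂 (fun _ : Fin 2 => V) 𝕂 :=
  (MultilinearMap.mkPiAlgebra 𝕂 (Fin 2) 𝕂).compLinearMap ![f, g]

lemma w2_apply (f g : V →ₗ[𝕂] 𝕂) (v : Fin 2 → V) : w2 f g v = f (v 0) * g (v 1) := by
  simp [w2, Fin.prod_univ_two]

/-- Wedge of two linear functionals, an alternating bilinear form. -/
noncomputable def wedgeACT (f g : V →ₗ[𝕂] 𝕂) : MultilinearMap 𝕂 (fun _ : Fin 2 => V) 𝕂 :=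
  w2 f g - w2 g f

lemma wedgeACT_apply (f g : V →ₗ[𝕂] 𝕂) (v : Fin 2 → V) :
    wedgeACT f g v = f (v 0) * g (v 1) - g (v 0) * f (v 1) := by
  simp [wedgeACT, w2_apply]

lemma wedgeACT_alt (f g : V →ₗ[𝕂] 𝕂) (x y : V) :
    wedgeACT f g ![x, y] = - wedgeACT f g ![y, x] := by
  simp only [wedgeACT_apply]
  show f x * g y - g x * f y = -(f y * g x - g y * f x)
  ring

variable {ι : Type*} [Fintype ι] [DecidableEq ι]

lemma coord_basis (b : Module.Basis ι 𝕂 V) (i j : ι) :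
    b.coord i (b j) = if j = i then (1:𝕂) else 0 := by
  simp [Module.Basis.coord_apply, Module.Basis.repr_self, Finsupp.single_apply]

lemma wedgeACT_basis (b : Module.Basis ι 𝕂 V) (i j u v : ι) :
    wedgeACT (b.coord i) (b.coord j) ![b u, b v] =
      (if u = i then (1:𝕂) else 0) * (if v = j then (1:𝕂) else 0)
      - (if u = j then (1:𝕂) else 0) * (if v = i then (1:𝕂) else 0) := by
  rw [wedgeACT_apply]
  show b.coord i (b u) * b.coord j (b v) - b.coord j (b u) * b.coord i (b v) = _
  rw [coord_basis, coord_basis, coord_basis, coord_basis]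

/-- The polarization of `alphaMap` at a pair of coordinate wedges. -/
noncomputable def thetaACT (b : Module.Basis ι 𝕂 V) (i j k l : ι) :
    MultilinearMap 𝕂 (fun _ : Fin 4 => V) 𝕂 :=
  alphaMap (wedgeACT (b.coord i) (b.coord j) + wedgeACT (b.coord k) (b.coord l))
    - alphaMap (wedgeACT (b.coord i) (b.coord j))
    - alphaMap (wedgeACT (b.coord k) (b.coord l))

lemma thetaACT_apply (b : Module.Basis ι 𝕂 V) (i j k l : ι) (v : Fin 4 → V) :
    thetaACT b i j k l v =
      (3 : 𝕂)⁻¹ * (2 * (wedgeACT (b.coord i) (b.coord j) ![v 0, v 1]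
            * wedgeACT (b.coord k) (b.coord l) ![v 2, v 3]
          + wedgeACT (b.coord k) (b.coord l) ![v 0, v 1]
            * wedgeACT (b.coord i) (b.coord j) ![v 2, v 3])
        + (wedgeACT (b.coord i) (b.coord j) ![v 0, v 2]
            * wedgeACT (b.coord k) (b.coord l) ![v 1, v 3]
          + wedgeACT (b.coord k) (b.coord l) ![v 0, v 2]
            * wedgeACT (b.coord i) (b.coord j) ![v 1, v 3])
        - (wedgeACT (b.coord i) (b.coord j) ![v 0, v 3]
            * wedgeACT (b.coord k) (b.coord l) ![v 1, v 2]
          + wedgeACT (b.coord k) (b.coord l) ![v 0, v 3]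
            * wedgeACT (b.coord i) (b.coord j) ![v 1, v 2])) := by
  simp only [thetaACT, MultilinearMap.sub_apply, alphaMap_apply, MultilinearMap.add_apply]
  ring

lemma Gsum (b : Module.Basis ι 𝕂 V) (R : ι → ι → ι → ι → 𝕂) (u v x y : ι) :
    ∑ i, ∑ j, ∑ k, ∑ l, R i j k l *
      (wedgeACT (b.coord i) (b.coord j) ![b u, b v]
        * wedgeACT (b.coord k) (b.coord l) ![b x, b y])
    = R u v x y - R v u x y - R u v y x + R v u y x := by
  simp only [wedgeACT_basis]
  simp [mul_ite, ite_mul, mul_sub, sub_mul, mul_zero, zero_mul, mul_one, one_mul,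
    Finset.sum_sub_distrib, Finset.sum_ite_eq, Finset.sum_ite_eq']
  ring

lemma Gsum' (b : Module.Basis ι 𝕂 V) (R : ι → ι → ι → ι → 𝕂) (u v x y : ι) :
    ∑ i, ∑ j, ∑ k, ∑ l, R i j k l *
      (wedgeACT (b.coord k) (b.coord l) ![b u, b v]
        * wedgeACT (b.coord i) (b.coord j) ![b x, b y])
    = R x y u v - R y x u v - R x y v u + R y x v u := by
  simp only [wedgeACT_basis]
  simp [mul_ite, ite_mul, mul_sub, sub_mul, mul_zero, zero_mul, mul_one, one_mul,
    Finset.sum_sub_distrib, Finset.sum_ite_eq, Finset.sum_ite_eq']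
  ring

lemma sum_split6 (f1 f2 f3 f4 f5 f6 : ι → ι → ι → ι → 𝕂) :
    ∑ i, ∑ j, ∑ k, ∑ l, ((3:𝕂)⁻¹ * (2 * (f1 i j k l + f2 i j k l)
        + (f3 i j k l + f4 i j k l) - (f5 i j k l + f6 i j k l)))
    = (3:𝕂)⁻¹ * (2 * ((∑ i, ∑ j, ∑ k, ∑ l, f1 i j k l) + ∑ i, ∑ j, ∑ k, ∑ l, f2 i j k l)
        + ((∑ i, ∑ j, ∑ k, ∑ l, f3 i j k l) + ∑ i, ∑ j, ∑ k, ∑ l, f4 i j k l)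
        - ((∑ i, ∑ j, ∑ k, ∑ l, f5 i j k l) + ∑ i, ∑ j, ∑ k, ∑ l, f6 i j k l)) := by
  simp only [Finset.mul_sum, Finset.sum_add_distrib, Finset.sum_sub_distrib, mul_add, mul_sub]

/-- The reconstruction formula: every algebraic curvature tensor is `1/8` times the sum of
its components times the polarized `alphaMap`s of coordinate wedges. -/
lemma act_key {𝕂 : Type*} [RCLike 𝕂] {V : Type*} [AddCommGroup V] [Module 𝕂 V]
    {ι : Type*} [Fintype ι] [DecidableEq ι] (b : Module.Basis ι 𝕂 V)
    (T : MultilinearMap 𝕂 (fun _ : Fin 4 => V) 𝕂) (hT : IsACT T)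
    (p q r s : ι) :
    T ![b p, b q, b r, b s] = ((8 : 𝕂)⁻¹ • ∑ i, ∑ j, ∑ k, ∑ l,
      (T ![b i, b j, b k, b l]) • thetaACT b i j k l) ![b p, b q, b r, b s] := by
  set R : ι → ι → ι → ι → 𝕂 := fun i j k l => T ![b i, b j, b k, b l] with hRdef
  have hbb : ∀ i j k l, R i j l k = - R i j k l := fun i j k l => by
    have h := (hT (b i) (b j) (b k) (b l)).1
    simp only [hRdef]; linear_combination h
  have hp : ∀ i j k l, R k l i j = R i j k l := fun i j k l =>
    ((hT (b i) (b j) (b k) (b l)).2.1).symm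
  have ha : ∀ i j k l, R j i k l = - R i j k l := fun i j k l => by
    linear_combination (-1:𝕂) * hp j i k l + hbb k l i j - hp i j k l
  have hB : ∀ i j k l, R i j k l + R i k l j + R i l j k = 0 := fun i j k l =>
    (hT (b i) (b j) (b k) (b l)).2.2
  rw [MultilinearMap.smul_apply]
  simp only [MultilinearMap.sum_apply, MultilinearMap.smul_apply, smul_eq_mul]
  rw [show (∑ i, ∑ j, ∑ k, ∑ l, R i j k l * thetaACT b i j k l ![b p, b q, b r, b s])
      = ∑ i, ∑ j, ∑ k, ∑ l, ((3:𝕂)⁻¹ *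
        (2 * (R i j k l * (wedgeACT (b.coord i) (b.coord j) ![b p, b q]
                * wedgeACT (b.coord k) (b.coord l) ![b r, b s])
            + R i j k l * (wedgeACT (b.coord k) (b.coord l) ![b p, b q]
                * wedgeACT (b.coord i) (b.coord j) ![b r, b s]))
          + (R i j k l * (wedgeACT (b.coord i) (b.coord j) ![b p, b r]
                * wedgeACT (b.coord k) (b.coord l) ![b q, b s])
            + R i j k l * (wedgeACT (b.coord k) (b.coord l) ![b p, b r]
                * wedgeACT (b.coord i) (b.coord j) ![b q, b s]))
          - (R i j k l * (wedgeACT (b.coord i) (b.coord j) ![b p, b s]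
                * wedgeACT (b.coord k) (b.coord l) ![b q, b r])
            + R i j k l * (wedgeACT (b.coord k) (b.coord l) ![b p, b s]
                * wedgeACT (b.coord i) (b.coord j) ![b q, b r])))) from
    Finset.sum_congr rfl fun i _ => Finset.sum_congr rfl fun j _ =>
      Finset.sum_congr rfl fun k _ => Finset.sum_congr rfl fun l _ => by
        rw [thetaACT_apply]
        simp only [Matrix.cons_val_zero, Matrix.cons_val_one, Matrix.head_cons,
          Matrix.cons_val_two, Matrix.tail_cons, Matrix.cons_val_three]
        ring]
  rw [sum_split6, Gsum b R p q r s, Gsum' b R p q r s, Gsum b R p r q s, Gsum' b R p r q s,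
    Gsum b R p s q r, Gsum' b R p s q r]
  have hB' : R p q r s - R p r q s + R p s q r = 0 := by
    linear_combination hB p q r s - hbb p r q s
  rw [ha p q r s, ha p q s r, ha r s p q, ha r s q p, ha p r q s, ha p r s q,
    ha q s p r, ha q s r p, ha p s q r, ha p s r q, ha q r p s, ha q r s p]
  rw [hbb p q r s, hbb r s p q, hbb p r q s, hbb q s p r, hbb p s q r, hbb q r p s]
  rw [hp p q r s, hp p r q s, hp p s q r]
  linear_combination (3:𝕂)⁻¹ * hB'

end ACTaux

/-- The span of the tensors `α(A)`, `A` alternating bilinear, is exactly the space of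
algebraic curvature tensors. -/
theorem stmt1 {𝕂 : Type*} [RCLike 𝕂] (V : Type*) [AddCommGroup V] [Module 𝕂 V]
    [FiniteDimensional 𝕂 V] :
    (Submodule.span 𝕂
        {T : MultilinearMap 𝕂 (fun _ : Fin 4 => V) 𝕂 |
          ∃ A : MultilinearMap 𝕂 (fun _ : Fin 2 => V) 𝕂,
            (∀ x y : V, A ![x, y] = - A ![y, x]) ∧
            ∀ w x y z : V,
              T ![w, x, y, z] =
                (3 : 𝕂)⁻¹ * (2 * (A ![w, x] * A ![y, z]) + A ![w, y] * A ![x, z]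
                  - A ![w, z] * A ![x, y])} :
      Set (MultilinearMap 𝕂 (fun _ : Fin 4 => V) 𝕂)) =
      {T | IsACT T} := by
  classical
  set genSet : Set (MultilinearMap 𝕂 (fun _ : Fin 4 => V) 𝕂) :=
    {T | ∃ A : MultilinearMap 𝕂 (fun _ : Fin 2 => V) 𝕂,
      (∀ x y : V, A ![x, y] = - A ![y, x]) ∧
      ∀ w x y z : V,
        T ![w, x, y, z] =
          (3 : 𝕂)⁻¹ * (2 * (A ![w, x] * A ![y, z]) + A ![w, y] * A ![x, z]
            - A ![w, z] * A ![x, y])} with hgen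
  -- the ACTs form a submodule
  set actSub : Submodule 𝕂 (MultilinearMap 𝕂 (fun _ : Fin 4 => V) 𝕂) :=
    { carrier := {T | IsACT T}
      add_mem' := by
        intro S T hS hT w x y z
        obtain ⟨h1, h2, h3⟩ := hS w x y z
        obtain ⟨g1, g2, g3⟩ := hT w x y z
        refine ⟨?_, ?_, ?_⟩ <;> simp only [MultilinearMap.add_apply]
        · linear_combination h1 + g1
        · linear_combination h2 + g2
        · linear_combination h3 + g3
      zero_mem' := by intro w x y z; simp
      smul_mem' := by
        intro c T hT w x y z
        obtain ⟨h1, h2, h3⟩ := hT w x y z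
        refine ⟨?_, ?_, ?_⟩ <;> simp only [MultilinearMap.smul_apply, smul_eq_mul]
        · linear_combination c * h1
        · linear_combination c * h2
        · linear_combination c * h3 } with hact
  apply Set.Subset.antisymm
  · -- span of generators consists of ACTs
    have hle : Submodule.span 𝕂 genSet ≤ actSub := by
      rw [Submodule.span_le]
      rintro T ⟨A, hA, hTf⟩
      intro w x y z
      refine ⟨?_, ?_, ?_⟩
      · rw [hTf w x y z, hTf w x z y, hA z y]; ring
      · rw [hTf w x y z, hTf y z w x, hA y w, hA y x, hA z w, hA z x]; ring
      · rw [hTf w x y z, hTf w y z x, hTf w z x y, hA z x, hA y x, hA z y]; ring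
    intro T hTmem
    exact hle hTmem
  · -- every ACT lies in the span
    intro T hT
    simp only [Set.mem_setOf_eq] at hT
    set b := Module.finBasis 𝕂 V with hb
    set n := Module.finrank 𝕂 V with hn
    have halpha : ∀ A : MultilinearMap 𝕂 (fun _ : Fin 2 => V) 𝕂,
        (∀ x y : V, A ![x, y] = - A ![y, x]) → alphaMap A ∈ genSet := by
      intro A hAalt
      refine ⟨A, hAalt, fun w x y z => ?_⟩
      rw [alphaMap_apply]
      simp
    have htheta : ∀ i j k l : Fin n,
        thetaACT b i j k l ∈ Submodule.span 𝕂 genSet := by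
      intro i j k l
      have a1 : ∀ x y : V, (wedgeACT (b.coord i) (b.coord j)) ![x,y]
          = - (wedgeACT (b.coord i) (b.coord j)) ![y,x] := wedgeACT_alt _ _
      have a2 : ∀ x y : V, (wedgeACT (b.coord k) (b.coord l)) ![x,y]
          = - (wedgeACT (b.coord k) (b.coord l)) ![y,x] := wedgeACT_alt _ _
      have a12 : ∀ x y : V,
          (wedgeACT (b.coord i) (b.coord j) + wedgeACT (b.coord k) (b.coord l)) ![x,y]
          = - (wedgeACT (b.coord i) (b.coord j) + wedgeACT (b.coord k) (b.coord l)) ![y,x] := by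
        intro x y
        simp only [MultilinearMap.add_apply, a1 x y, a2 x y]
        ring
      exact Submodule.sub_mem _
        (Submodule.sub_mem _
          (Submodule.subset_span (halpha _ a12))
          (Submodule.subset_span (halpha _ a1)))
        (Submodule.subset_span (halpha _ a2))
    have key : T = (8 : 𝕂)⁻¹ • ∑ i, ∑ j, ∑ k, ∑ l,
        (T ![b i, b j, b k, b l]) • thetaACT b i j k l := by
      apply Module.Basis.ext_multilinear (fun _ => b)
      intro v
      have hv : (fun i => b (v i)) = ![b (v 0), b (v 1), b (v 2), b (v 3)] := by
        funext i; fin_cases i <;> rfl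
      rw [hv]
      exact act_key b T hT (v 0) (v 1) (v 2) (v 3)
    rw [key]
    exact Submodule.smul_mem _ _ (Submodule.sum_mem _ fun i _ => Submodule.sum_mem _ fun j _ =>
      Submodule.sum_mem _ fun k _ => Submodule.sum_mem _ fun l _ =>
        Submodule.smul_mem _ _ (htheta i j k l))
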